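/- arXiv:2510.11462 — 2 statements merged into one kernel-verified Lean document; each statement's English description precedes it below -/
import Mathlib

section
/- Fix integers V ≥ 2 and d ≥ 1, identify the alphabet with Fin V with a distinguished mask symbol M, and for t > 0 let K_t be the masking channel on Fin V given by K_t(·|M) = δ_M and, for x ≠ M, K_t(y|x) = e^{−t} δ_{y=x} + (1 − e^{−t}) δ_{y=M}. Let q_0 be any probability mass function on (Fin V)^d, and let q_t be the corrupted distribution q_t(y) = Σ_{x ∈ (Fin V)^d} q_0(x) ∏_{i=1}^d K_t(y_i | x_i). Let p_init be the product distribution on (Fin V)^d whose every coordinate is ν_{e^{−t}}, where ν_ε(M) = 1 − ε and ν_ε(j) = ε/(V−1) for j ≠ M. Then KL(q_t ‖ p_init) ≤ Σ_{i=1}^d [ P_{x∼q_0}(x_i ≠ M) · e^{−t} log(V−1) + P_{x∼q_0}(x_i = M) · (−log(1 − e^{−t})) ]. -/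
open Finset

/-- The masking channel of a masked diffusion model at time `t`: a mask token stays
masked; a non-mask token `x` survives with probability `e⁻ᵗ` and is replaced by the
mask symbol `M` with probability `1 - e⁻ᵗ`. -/
noncomputable def maskKernel (V : ℕ) (M : Fin V) (t : ℝ) (x y : Fin V) : ℝ :=
  if x = M then (if y = M then 1 else 0)
  else if y = x then Real.exp (-t) else if y = M then 1 - Real.exp (-t) else 0

/-- The non-stationary per-token initialization distribution of Assumption A.1:
mass `1 - ε` on the mask symbol and mass `ε` spread uniformly over the other
`V - 1` symbols. -/
noncomputable def nuEps (V : ℕ) (M : Fin V) (ε : ℝ) (y : Fin V) : ℝ :=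
  if y = M then 1 - ε else ε / ((V : ℝ) - 1)

private lemma philinear (c : ℝ) (hc : 0 < c) (v : ℝ) (hv : 0 ≤ v) :
    v * Real.log (v / c) = v * Real.log v + (-Real.log c) * v := by
  rcases hv.eq_or_lt with h | h
  · simp [← h]
  · rw [Real.log_div h.ne' hc.ne']; ring

private lemma linConvex (a : ℝ) : ConvexOn ℝ (Set.Ici (0:ℝ)) (fun v => a * v) := by
  refine ⟨convex_Ici 0, fun x _ y _ p q hp hq hpq => ?_⟩
  simp only [smul_eq_mul]
  exact le_of_eq (by ring)

/-- Penultimate inequality of Lemma A.2: the KL divergence between the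
token-wise corrupted distribution `q_t` and the product initialization
`p_init = ν_{e⁻ᵗ}^{⊗ d}` is bounded by the sum over positions of the
probability-weighted per-token divergences. -/
theorem kl_corrupted_le_tokenwise_sum
    {V d : ℕ} (hV : 2 ≤ V) (hd : 1 ≤ d) (M : Fin V) (t : ℝ) (ht : 0 < t)
    (q0 : (Fin d → Fin V) → ℝ)
    (hq00 : ∀ x, 0 ≤ q0 x) (hq01 : ∑ x, q0 x = 1) :
    ∑ y : Fin d → Fin V,
        (∑ x, q0 x * ∏ i, maskKernel V M t (x i) (y i)) *
          Real.log ((∑ x, q0 x * ∏ i, maskKernel V M t (x i) (y i)) /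
            ∏ i, nuEps V M (Real.exp (-t)) (y i)) ≤
      ∑ i : Fin d,
        ((∑ x ∈ Finset.univ.filter (fun x : Fin d → Fin V => x i ≠ M), q0 x) *
            (Real.exp (-t) * Real.log ((V : ℝ) - 1)) +
          (∑ x ∈ Finset.univ.filter (fun x : Fin d → Fin V => x i = M), q0 x) *
            (-Real.log (1 - Real.exp (-t)))) := by
  set ε := Real.exp (-t) with hεdef
  have hε : 0 < ε := Real.exp_pos _
  have hε1 : ε < 1 := by
    rw [hεdef]
    exact Real.exp_lt_one_iff.mpr (by linarith)
  have h1ε : 0 < 1 - ε := by linarith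
  have hVR : (0:ℝ) < (V:ℝ) - 1 := by
    have : (2:ℝ) ≤ (V:ℝ) := by exact_mod_cast hV
    linarith
  set K := maskKernel V M t with hKdef
  set r := nuEps V M ε with hrdef
  have hr : ∀ z, 0 < r z := by
    intro z
    rw [hrdef, nuEps]
    split
    · exact h1ε
    · positivity
  have hK0 : ∀ a z, 0 ≤ K a z := by
    intro a z
    rw [hKdef, maskKernel]
    split
    · split <;> norm_num
    · split
      · exact hε.le
      · split
        · linarith
        · exact le_refl 0
  have hK1 : ∀ a, ∑ z, K a z = 1 := by
    intro a
    by_cases ha : a = M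
    · simp [hKdef, maskKernel, ha]
    · rw [show (1:ℝ) = ε + (1 - ε) by ring]
      rw [← Finset.sum_subset (Finset.subset_univ {a, M})
        (by
          intro z _ hz
          simp only [Finset.mem_insert, Finset.mem_singleton, not_or] at hz
          simp [hKdef, maskKernel, ha, hz.1, hz.2])]
      rw [Finset.sum_pair ha]
      simp [hKdef, maskKernel, ha, Ne.symm ha]
  -- per-token divergence values
  set g : Fin V → Fin V → ℝ := fun a z => K a z * Real.log (K a z / r z) with hgdef
  have hD : ∀ a : Fin V, ∑ z, g a z
      = if a = M then -Real.log (1 - ε) else ε * Real.log ((V:ℝ) - 1) := by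
    intro a
    by_cases ha : a = M
    · rw [if_pos ha]
      subst ha
      rw [Finset.sum_eq_single a]
      · have e1 : K a a = 1 := by simp [hKdef, maskKernel]
        have e2 : r a = 1 - ε := by simp [hrdef, nuEps]
        simp only [hgdef, e1, e2, one_mul, one_div, Real.log_inv]
      · intro z _ hz
        simp [hgdef, hKdef, maskKernel, hz]
      · simp
    · rw [if_neg ha]
      rw [← Finset.sum_subset (Finset.subset_univ {a, M})
        (by
          intro z _ hz
          simp only [Finset.mem_insert, Finset.mem_singleton, not_or] at hz
          simp [hgdef, hKdef, maskKernel, ha, hz.1, hz.2])]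
      rw [Finset.sum_pair ha]
      have h1 : K a a = ε := by simp [hKdef, maskKernel, ha, hεdef]
      have h2 : K a M = 1 - ε := by simp [hKdef, maskKernel, ha, Ne.symm ha, hεdef]
      have h3 : r a = ε / ((V:ℝ) - 1) := by simp [hrdef, nuEps, ha]
      have h4 : r M = 1 - ε := by simp [hrdef, nuEps]
      simp only [hgdef, h1, h2, h3, h4]
      have h5 : ε / (ε / ((V:ℝ) - 1)) = (V:ℝ) - 1 := by
        field_simp
      rw [h5, div_self h1ε.ne', Real.log_one]
      ring
  -- tensorization
  have hB : ∀ x : Fin d → Fin V,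
      ∑ y : Fin d → Fin V, (∏ i, K (x i) (y i)) *
        Real.log ((∏ i, K (x i) (y i)) / ∏ i, r (y i)) = ∑ i, ∑ z, g (x i) z := by
    intro x
    set H : Fin d → Fin d → Fin V → ℝ :=
      fun i j z => if j = i then g (x j) z else K (x j) z with hHdef
    have hpt : ∀ y : Fin d → Fin V,
        (∏ i, K (x i) (y i)) * Real.log ((∏ i, K (x i) (y i)) / ∏ i, r (y i))
          = ∑ i, ∏ j, H i j (y j) := by
      intro y
      by_cases hz : ∀ j, K (x j) (y j) ≠ 0
      · have hKpos : ∀ j, 0 < K (x j) (y j) :=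
          fun j => lt_of_le_of_ne (hK0 _ _) (Ne.symm (hz j))
        have hP : 0 < ∏ j, K (x j) (y j) := Finset.prod_pos fun j _ => hKpos j
        have hRP : 0 < ∏ j, r (y j) := Finset.prod_pos fun j _ => hr _
        rw [Real.log_div hP.ne' hRP.ne',
          Real.log_prod (fun j _ => (hz j)),
          Real.log_prod (fun j _ => (hr (y j)).ne'),
          ← Finset.sum_sub_distrib, Finset.mul_sum]
        refine Finset.sum_congr rfl fun i _ => ?_
        have : ∀ j, H i j (y j)
            = K (x j) (y j) * (if j = i then Real.log (K (x i) (y i) / r (y i)) else 1) := by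
          intro j
          by_cases hji : j = i
          · subst hji; simp [hHdef, hgdef]
          · simp [hHdef, hji]
        rw [Finset.prod_congr rfl (fun j _ => this j), Finset.prod_mul_distrib]
        rw [Finset.prod_ite_eq' Finset.univ i
          (fun _ => Real.log (K (x i) (y i) / r (y i)))]
        simp only [Finset.mem_univ, if_pos]
        rw [Real.log_div (hz i) (hr (y i)).ne']
        try ring
      · push_neg at hz
        obtain ⟨j0, hj0⟩ := hz
        rw [Finset.prod_eq_zero (Finset.mem_univ j0) hj0, zero_mul]
        symm
        refine Finset.sum_eq_zero fun i _ => ?_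
        refine Finset.prod_eq_zero (Finset.mem_univ j0) ?_
        by_cases hji : j0 = i
        · subst hji; simp [hHdef, hgdef, hj0]
        · simp [hHdef, hji, hj0]
    rw [Finset.sum_congr rfl (fun y _ => hpt y), Finset.sum_comm]
    refine Finset.sum_congr rfl fun i _ => ?_
    rw [← Fintype.prod_sum (fun j z => H i j z)]
    have : ∀ j, ∑ z, H i j z = if j = i then ∑ z, g (x i) z else 1 := by
      intro j
      by_cases hji : j = i
      · subst hji; simp [hHdef]
      · simp only [hHdef, hji, if_neg hji]
        exact hK1 _
    rw [Finset.prod_congr rfl (fun j _ => this j),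
      Finset.prod_ite_eq' Finset.univ i (fun _ => ∑ z, g (x i) z)]
    simp
  -- Jensen step, pointwise in y
  have hA : ∀ y : Fin d → Fin V,
      (∑ x, q0 x * ∏ i, K (x i) (y i)) *
          Real.log ((∑ x, q0 x * ∏ i, K (x i) (y i)) / ∏ i, r (y i))
        ≤ ∑ x, q0 x * ((∏ i, K (x i) (y i)) *
            Real.log ((∏ i, K (x i) (y i)) / ∏ i, r (y i))) := by
    intro y
    set c := ∏ i, r (y i) with hcdef
    have hc : 0 < c := Finset.prod_pos fun i _ => hr _
    set f : ℝ → ℝ := fun v => v * Real.log v + (-Real.log c) * v with hfdef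
    have hconv : ConvexOn ℝ (Set.Ici (0:ℝ)) f :=
      Real.convexOn_mul_log.add (linConvex _)
    have hu0 : ∀ x : Fin d → Fin V, (0:ℝ) ≤ ∏ i, K (x i) (y i) :=
      fun x => Finset.prod_nonneg fun i _ => hK0 _ _
    have hmem : ∀ x ∈ (Finset.univ : Finset (Fin d → Fin V)), (∏ i, K (x i) (y i)) ∈ Set.Ici (0:ℝ) :=
      fun x _ => hu0 x
    have hj := hconv.map_sum_le (fun x _ => hq00 x) hq01 hmem
    simp only [smul_eq_mul] at hj
    have hs0 : (0:ℝ) ≤ ∑ x, q0 x * ∏ i, K (x i) (y i) :=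
      Finset.sum_nonneg fun x _ => mul_nonneg (hq00 x) (hu0 x)
    calc (∑ x, q0 x * ∏ i, K (x i) (y i)) *
          Real.log ((∑ x, q0 x * ∏ i, K (x i) (y i)) / c)
        = f (∑ x, q0 x * ∏ i, K (x i) (y i)) := philinear c hc _ hs0
      _ ≤ ∑ x, q0 x * f (∏ i, K (x i) (y i)) := hj
      _ = ∑ x, q0 x * ((∏ i, K (x i) (y i)) *
            Real.log ((∏ i, K (x i) (y i)) / c)) := by
          refine Finset.sum_congr rfl fun x _ => ?_
          rw [philinear c hc _ (hu0 x)]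
  calc ∑ y : Fin d → Fin V,
        (∑ x, q0 x * ∏ i, K (x i) (y i)) *
          Real.log ((∑ x, q0 x * ∏ i, K (x i) (y i)) / ∏ i, r (y i))
      ≤ ∑ y : Fin d → Fin V, ∑ x, q0 x * ((∏ i, K (x i) (y i)) *
          Real.log ((∏ i, K (x i) (y i)) / ∏ i, r (y i))) :=
        Finset.sum_le_sum fun y _ => hA y
    _ = ∑ x, q0 x * ∑ y : Fin d → Fin V, (∏ i, K (x i) (y i)) *
          Real.log ((∏ i, K (x i) (y i)) / ∏ i, r (y i)) := by
        rw [Finset.sum_comm]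
        exact Finset.sum_congr rfl fun x _ => (Finset.mul_sum _ _ _).symm
    _ = ∑ x, q0 x * ∑ i, (if x i = M then -Real.log (1 - ε)
          else ε * Real.log ((V:ℝ) - 1)) := by
        refine Finset.sum_congr rfl fun x _ => ?_
        rw [hB x]
        exact congrArg _ (Finset.sum_congr rfl fun i _ => hD (x i))
    _ = ∑ i : Fin d, ∑ x, q0 x * (if x i = M then -Real.log (1 - ε)
          else ε * Real.log ((V:ℝ) - 1)) := by
        rw [← Finset.sum_comm]
        exact Finset.sum_congr rfl fun x _ => Finset.mul_sum _ _ _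
    _ = ∑ i : Fin d,
        ((∑ x ∈ Finset.univ.filter (fun x : Fin d → Fin V => x i ≠ M), q0 x) *
            (ε * Real.log ((V : ℝ) - 1)) +
          (∑ x ∈ Finset.univ.filter (fun x : Fin d → Fin V => x i = M), q0 x) *
            (-Real.log (1 - ε))) := by
        refine Finset.sum_congr rfl fun i _ => ?_
        rw [← Finset.sum_filter_add_sum_filter_not Finset.univ (fun x => x i = M)]
        rw [add_comm]
        congr 1
        · rw [Finset.sum_mul]
          refine Finset.sum_congr rfl fun x hx => ?_
          simp only [Finset.mem_filter] at hx
          rw [if_neg hx.2]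
        · rw [Finset.sum_mul]
          refine Finset.sum_congr rfl fun x hx => ?_
          simp only [Finset.mem_filter] at hx
          rw [if_pos hx.2]
end

section
/- Fix integers V ≥ 2 and d ≥ 1, identify the alphabet with Fin V with a distinguished mask symbol M, and for t > 0 let K_t be the masking channel on Fin V given by K_t(·|M) = δ_M and, for x ≠ M, K_t(y|x) = e^{−t} δ_{y=x} + (1 − e^{−t}) δ_{y=M}. Let q_0 be any probability mass function on (Fin V)^d, let q_t(y) = Σ_x q_0(x) ∏_{i=1}^d K_t(y_i | x_i), and let p_init be the product distribution on (Fin V)^d whose every coordinate is ν_{e^{−t}}, where ν_ε(M) = 1 − ε and ν_ε(j) = ε/(V−1) for j ≠ M. Then for every t ≥ log 2, KL(q_t ‖ p_init) ≤ d · e^{−t} · (log(V − 1) + 2). -/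
open Finset

private lemma mk_nonneg {V : ℕ} (M : Fin V) {t : ℝ} (ht : 0 ≤ t) (x y : Fin V) :
    0 ≤ maskKernel V M t x y := by
  have h1 : Real.exp (-t) ≤ 1 := Real.exp_le_one_iff.mpr (by linarith)
  have h2 : (0:ℝ) ≤ Real.exp (-t) := (Real.exp_pos _).le
  unfold maskKernel; split_ifs <;> linarith

private lemma mk_sum {V : ℕ} (M : Fin V) (t : ℝ) (x : Fin V) :
    ∑ y, maskKernel V M t x y = 1 := by
  unfold maskKernel
  by_cases hx : x = M
  · simp [hx]
  · simp only [if_neg hx]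
    have key : ∀ y : Fin V,
        (if y = x then Real.exp (-t) else if y = M then 1 - Real.exp (-t) else 0)
        = (if y = x then Real.exp (-t) else 0) + (if y = M then 1 - Real.exp (-t) else 0) := by
      intro y
      by_cases h1 : y = x
      · subst h1; simp [hx]
      · simp [h1]
    rw [Finset.sum_congr rfl fun y _ => key y, Finset.sum_add_distrib]
    simp

private lemma nu_pos {V : ℕ} (hV : 2 ≤ V) (M : Fin V) {ε : ℝ} (hε0 : 0 < ε)
    (hε1 : ε ≤ 1/2) (y : Fin V) : 0 < nuEps V M ε y := by
  have hV1 : (1:ℝ) ≤ (V:ℝ) - 1 := by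
    have : (2:ℝ) ≤ (V:ℝ) := by exact_mod_cast hV
    linarith
  unfold nuEps; split_ifs
  · linarith
  · exact div_pos hε0 (by linarith)

private lemma eps_le_half {t : ℝ} (ht : Real.log 2 ≤ t) : Real.exp (-t) ≤ 1/2 := by
  have h : Real.exp (-t) ≤ Real.exp (-Real.log 2) := Real.exp_le_exp.mpr (by linarith)
  have h2 : Real.exp (-Real.log 2) = 1/2 := by
    rw [Real.exp_neg, Real.exp_log two_pos]; norm_num
  linarith

private lemma t_nonneg {t : ℝ} (ht : Real.log 2 ≤ t) : 0 ≤ t :=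
  le_trans (Real.log_nonneg one_le_two) ht

/-- Per-coordinate KL bound. -/
private lemma coord_kl_le {V : ℕ} (hV : 2 ≤ V) (M : Fin V) {t : ℝ}
    (ht : Real.log 2 ≤ t) (x : Fin V) :
    ∑ y, maskKernel V M t x y *
        Real.log (maskKernel V M t x y / nuEps V M (Real.exp (-t)) y)
      ≤ Real.exp (-t) * (Real.log ((V:ℝ) - 1) + 2) := by
  have hε0 : 0 < Real.exp (-t) := Real.exp_pos _
  have hε1 : Real.exp (-t) ≤ 1/2 := eps_le_half ht
  set ε := Real.exp (-t) with hεdef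
  have hV1 : (1:ℝ) ≤ (V:ℝ) - 1 := by
    have : (2:ℝ) ≤ (V:ℝ) := by exact_mod_cast hV
    linarith
  have hlogV : 0 ≤ Real.log ((V:ℝ) - 1) := Real.log_nonneg hV1
  by_cases hx : x = M
  · have hsum : (∑ y, maskKernel V M t x y *
        Real.log (maskKernel V M t x y / nuEps V M ε y)) = Real.log (1 / (1 - ε)) := by
      rw [Finset.sum_eq_single M]
      · simp [maskKernel, nuEps, hx]
      · intro y _ hy; simp [maskKernel, nuEps, hx, hy]
      · exact fun h => absurd (Finset.mem_univ M) h
    rw [hsum]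
    have hpos : (0:ℝ) < 1 / (1 - ε) := by
      apply div_pos one_pos; linarith
    have h1 : Real.log (1 / (1 - ε)) ≤ 1 / (1 - ε) - 1 := Real.log_le_sub_one_of_pos hpos
    have h1ε : (1:ℝ) - ε ≠ 0 := by linarith
    have h2 : 1 / (1 - ε) - 1 = ε / (1 - ε) := by
      field_simp
      ring
    have h3 : ε / (1 - ε) ≤ 2 * ε := by
      rw [div_le_iff₀ (by linarith)]; nlinarith
    nlinarith [mul_nonneg hε0.le hlogV]
  · have hεne : ε ≠ 0 := hε0.ne'
    have hVne : (V:ℝ) - 1 ≠ 0 := by linarith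
    have h1ε : (1:ℝ) - ε ≠ 0 := by linarith
    have hsum : (∑ y, maskKernel V M t x y *
        Real.log (maskKernel V M t x y / nuEps V M ε y)) = ε * Real.log ((V:ℝ) - 1) := by
      rw [Finset.sum_eq_single x]
      · have hdiv : ε / (ε / ((V:ℝ) - 1)) = (V:ℝ) - 1 := by
          field_simp
        simp [maskKernel, nuEps, hx, hdiv]
        rw [← hεdef, hdiv]
      · intro y _ hyx
        by_cases hyM : y = M
        · have hMx : ¬ (M = x) := fun h => hx h.symm
          simp [maskKernel, nuEps, hyM, hx, hMx, div_self h1ε]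
          right; right; left; exact div_self h1ε
        · simp [maskKernel, nuEps, hx, hyx, hyM]
      · exact fun h => absurd (Finset.mem_univ x) h
    rw [hsum]
    nlinarith [hε0.le]

/-- Tensorization: the KL of a product kernel row against the product reference. -/
private lemma prod_kl_le {V d : ℕ} (hV : 2 ≤ V) (M : Fin V) {t : ℝ}
    (ht : Real.log 2 ≤ t) (x : Fin d → Fin V) :
    ∑ y : Fin d → Fin V, (∏ i, maskKernel V M t (x i) (y i)) *
        Real.log ((∏ i, maskKernel V M t (x i) (y i)) /
          ∏ i, nuEps V M (Real.exp (-t)) (y i))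
      ≤ (d : ℝ) * Real.exp (-t) * (Real.log ((V:ℝ) - 1) + 2) := by
  have ht0 : 0 ≤ t := t_nonneg ht
  have hε0 : 0 < Real.exp (-t) := Real.exp_pos _
  have hε1 : Real.exp (-t) ≤ 1/2 := eps_le_half ht
  have hν : ∀ b, 0 < nuEps V M (Real.exp (-t)) b := nu_pos hV M hε0 hε1
  -- pointwise splitting of the log
  have hpt : ∀ y : Fin d → Fin V,
      (∏ i, maskKernel V M t (x i) (y i)) *
        Real.log ((∏ i, maskKernel V M t (x i) (y i)) /
          ∏ i, nuEps V M (Real.exp (-t)) (y i))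
      = ∑ i, (∏ j, maskKernel V M t (x j) (y j)) *
          Real.log (maskKernel V M t (x i) (y i) / nuEps V M (Real.exp (-t)) (y i)) := by
    intro y
    by_cases hz : (∏ i, maskKernel V M t (x i) (y i)) = 0
    · simp [hz]
    · have hne : ∀ i : Fin d, maskKernel V M t (x i) (y i) ≠ 0 := by
        intro i h
        exact hz (Finset.prod_eq_zero (Finset.mem_univ i) h)
      rw [← Finset.prod_div_distrib,
        Real.log_prod (fun i _ => div_ne_zero (hne i) (hν (y i)).ne'),
        Finset.mul_sum]
  have hi : ∀ i : Fin d,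
      ∑ y : Fin d → Fin V, (∏ j, maskKernel V M t (x j) (y j)) *
          Real.log (maskKernel V M t (x i) (y i) / nuEps V M (Real.exp (-t)) (y i))
        ≤ Real.exp (-t) * (Real.log ((V:ℝ) - 1) + 2) := by
    intro i
    set F : Fin d → Fin V → ℝ := fun j z =>
      if j = i then maskKernel V M t (x i) z *
        Real.log (maskKernel V M t (x i) z / nuEps V M (Real.exp (-t)) z)
      else maskKernel V M t (x j) z with hF
    have hFne : ∀ j ∈ (univ : Finset (Fin d)) \ {i}, ∀ z, F j z = maskKernel V M t (x j) z := by
      intro j hj z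
      have hji : j ≠ i := by simpa using (Finset.mem_sdiff.mp hj).2
      simp [hF, hji]
    have hfac : ∀ y : Fin d → Fin V,
        (∏ j, maskKernel V M t (x j) (y j)) *
          Real.log (maskKernel V M t (x i) (y i) / nuEps V M (Real.exp (-t)) (y i))
        = ∏ j, F j (y j) := by
      intro y
      rw [Finset.prod_eq_mul_prod_sdiff_singleton_of_mem (Finset.mem_univ i)
            (fun j => maskKernel V M t (x j) (y j)),
        Finset.prod_eq_mul_prod_sdiff_singleton_of_mem (Finset.mem_univ i) (fun j => F j (y j)),
        Finset.prod_congr rfl (fun j hj => hFne j hj (y j))]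
      have hFi : F i (y i) = maskKernel V M t (x i) (y i) *
          Real.log (maskKernel V M t (x i) (y i) / nuEps V M (Real.exp (-t)) (y i)) := by
        simp [hF]
      rw [hFi]; ring
    calc ∑ y : Fin d → Fin V, (∏ j, maskKernel V M t (x j) (y j)) *
            Real.log (maskKernel V M t (x i) (y i) / nuEps V M (Real.exp (-t)) (y i))
        = ∑ y : Fin d → Fin V, ∏ j, F j (y j) :=
          Finset.sum_congr rfl fun y _ => hfac y
      _ = ∏ j, ∑ z, F j z := (Fintype.prod_sum F).symm
      _ = (∑ z, F i z) * ∏ j ∈ (univ : Finset (Fin d)) \ {i}, ∑ z, F j z :=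
          Finset.prod_eq_mul_prod_sdiff_singleton_of_mem (Finset.mem_univ i) _
      _ = ∑ z, F i z := by
          rw [Finset.prod_congr rfl (fun j hj => by
            rw [Finset.sum_congr rfl fun z _ => hFne j hj z, mk_sum])]
          simp
      _ = ∑ z, maskKernel V M t (x i) z *
            Real.log (maskKernel V M t (x i) z / nuEps V M (Real.exp (-t)) z) := by
          refine Finset.sum_congr rfl fun z _ => ?_
          simp [hF]
      _ ≤ Real.exp (-t) * (Real.log ((V:ℝ) - 1) + 2) := coord_kl_le hV M ht (x i)
  calc ∑ y : Fin d → Fin V, (∏ i, maskKernel V M t (x i) (y i)) *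
          Real.log ((∏ i, maskKernel V M t (x i) (y i)) /
            ∏ i, nuEps V M (Real.exp (-t)) (y i))
      = ∑ y : Fin d → Fin V, ∑ i,
          (∏ j, maskKernel V M t (x j) (y j)) *
            Real.log (maskKernel V M t (x i) (y i) / nuEps V M (Real.exp (-t)) (y i)) :=
        Finset.sum_congr rfl fun y _ => hpt y
    _ = ∑ i, ∑ y : Fin d → Fin V,
          (∏ j, maskKernel V M t (x j) (y j)) *
            Real.log (maskKernel V M t (x i) (y i) / nuEps V M (Real.exp (-t)) (y i)) :=
        Finset.sum_comm
    _ ≤ ∑ _i : Fin d, Real.exp (-t) * (Real.log ((V:ℝ) - 1) + 2) :=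
        Finset.sum_le_sum fun i _ => hi i
    _ = (d : ℝ) * Real.exp (-t) * (Real.log ((V:ℝ) - 1) + 2) := by
        rw [Finset.sum_const, Finset.card_univ, Fintype.card_fin, nsmul_eq_mul, mul_assoc]

/-- Lemma A.2 (Approximate Error of the Initial State):
`KL(q_t ‖ p_init) ≤ d · e⁻ᵗ · (log (V - 1) + 2)` once `t ≥ log 2`. -/
theorem kl_corrupted_le_explicit
    {V d : ℕ} (hV : 2 ≤ V) (hd : 1 ≤ d) (M : Fin V) (t : ℝ)
    (ht : Real.log 2 ≤ t)
    (q0 : (Fin d → Fin V) → ℝ)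
    (hq00 : ∀ x, 0 ≤ q0 x) (hq01 : ∑ x, q0 x = 1) :
    ∑ y : Fin d → Fin V,
        (∑ x, q0 x * ∏ i, maskKernel V M t (x i) (y i)) *
          Real.log ((∑ x, q0 x * ∏ i, maskKernel V M t (x i) (y i)) /
            ∏ i, nuEps V M (Real.exp (-t)) (y i)) ≤
      (d : ℝ) * Real.exp (-t) * (Real.log ((V : ℝ) - 1) + 2) := by
  have ht0 : 0 ≤ t := t_nonneg ht
  have hε0 : 0 < Real.exp (-t) := Real.exp_pos _
  have hε1 : Real.exp (-t) ≤ 1/2 := eps_le_half ht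
  have hν : ∀ b, 0 < nuEps V M (Real.exp (-t)) b := nu_pos hV M hε0 hε1
  -- Jensen / log-sum inequality, pointwise in y
  have key1 : ∀ y : Fin d → Fin V,
      (∑ x, q0 x * ∏ i, maskKernel V M t (x i) (y i)) *
        Real.log ((∑ x, q0 x * ∏ i, maskKernel V M t (x i) (y i)) /
          ∏ i, nuEps V M (Real.exp (-t)) (y i))
      ≤ ∑ x, q0 x * ((∏ i, maskKernel V M t (x i) (y i)) *
          Real.log ((∏ i, maskKernel V M t (x i) (y i)) /
            ∏ i, nuEps V M (Real.exp (-t)) (y i))) := by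
    intro y
    set p : ℝ := ∏ i, nuEps V M (Real.exp (-t)) (y i) with hpdef
    have hp0 : 0 < p := Finset.prod_pos fun i _ => hν (y i)
    set P : (Fin d → Fin V) → ℝ := fun x => ∏ i, maskKernel V M t (x i) (y i) with hPdef
    have hP0 : ∀ x, 0 ≤ P x :=
      fun x => Finset.prod_nonneg fun i _ => mk_nonneg M ht0 _ _
    have J := Real.convexOn_mul_log.map_sum_le (t := univ) (w := q0)
      (p := fun x => P x / p) (fun x _ => hq00 x) hq01
      (fun x _ => Set.mem_Ici.mpr (div_nonneg (hP0 x) hp0.le))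
    simp only [smul_eq_mul] at J
    have hqz : ∑ x, q0 x * (P x / p) = (∑ x, q0 x * P x) / p := by
      rw [Finset.sum_div]
      exact Finset.sum_congr rfl fun x _ => (mul_div_assoc _ _ _).symm
    rw [hqz] at J
    set q : ℝ := ∑ x, q0 x * P x with hqdef
    have J' := mul_le_mul_of_nonneg_left J hp0.le
    have e1 : p * (q / p * Real.log (q / p)) = q * Real.log (q / p) := by
      rw [← mul_assoc, mul_div_cancel₀ _ hp0.ne']
    have e2 : p * (∑ x, q0 x * (P x / p * Real.log (P x / p)))
        = ∑ x, q0 x * (P x * Real.log (P x / p)) := by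
      rw [Finset.mul_sum]
      refine Finset.sum_congr rfl fun x _ => ?_
      rw [show p * (q0 x * (P x / p * Real.log (P x / p)))
          = q0 x * (p * (P x / p) * Real.log (P x / p)) by ring,
        mul_div_cancel₀ _ hp0.ne']
    rw [e1, e2] at J'
    exact J'
  calc ∑ y : Fin d → Fin V,
        (∑ x, q0 x * ∏ i, maskKernel V M t (x i) (y i)) *
          Real.log ((∑ x, q0 x * ∏ i, maskKernel V M t (x i) (y i)) /
            ∏ i, nuEps V M (Real.exp (-t)) (y i))
      ≤ ∑ y : Fin d → Fin V, ∑ x, q0 x * ((∏ i, maskKernel V M t (x i) (y i)) *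
          Real.log ((∏ i, maskKernel V M t (x i) (y i)) /
            ∏ i, nuEps V M (Real.exp (-t)) (y i))) :=
        Finset.sum_le_sum fun y _ => key1 y
    _ = ∑ x, ∑ y : Fin d → Fin V, q0 x * ((∏ i, maskKernel V M t (x i) (y i)) *
          Real.log ((∏ i, maskKernel V M t (x i) (y i)) /
            ∏ i, nuEps V M (Real.exp (-t)) (y i))) := Finset.sum_comm
    _ = ∑ x, q0 x * ∑ y : Fin d → Fin V, ((∏ i, maskKernel V M t (x i) (y i)) *
          Real.log ((∏ i, maskKernel V M t (x i) (y i)) /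
            ∏ i, nuEps V M (Real.exp (-t)) (y i))) :=
        Finset.sum_congr rfl fun x _ => by rw [Finset.mul_sum]
    _ ≤ ∑ x, q0 x * ((d : ℝ) * Real.exp (-t) * (Real.log ((V : ℝ) - 1) + 2)) :=
        Finset.sum_le_sum fun x _ =>
          mul_le_mul_of_nonneg_left (prod_kl_le hV M ht x) (hq00 x)
    _ = (d : ℝ) * Real.exp (-t) * (Real.log ((V : ℝ) - 1) + 2) := by
        rw [← Finset.sum_mul, hq01, one_mul]
end
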